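/- arXiv:2109.09539 — 3 statements merged into one kernel-verified Lean document; each statement's English description precedes it below -/
import Mathlib

section
/- Let B be a complete Boolean algebra, A a Boolean subalgebra of B, and k, l, m, n families of elements of A indexed by a set I such that there exists some Boolean algebra C containing A as a subalgebra and an element y ∈ C with (y ⊓ kᵢ) ⊔ (yᶜ ⊓ lᵢ) = (y ⊓ mᵢ) ⊔ (yᶜ ⊓ nᵢ) for all i ∈ I. Then there exists a ∈ B satisfying (a ⊓ kᵢ) ⊔ (aᶜ ⊓ lᵢ) = (a ⊓ mᵢ) ⊔ (aᶜ ⊓ nᵢ) for all i ∈ I. -/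
open scoped symmDiff

/-- `x ⊓ k = x ⊓ m` iff `x` is disjoint from the symmetric difference of `k` and `m`. -/
lemma inf_eq_inf_iff_disjoint_symmDiff {α : Type*} [BooleanAlgebra α] (x k m : α) :
    x ⊓ k = x ⊓ m ↔ Disjoint x (k ∆ m) := by
  constructor
  · intro h
    rw [disjoint_iff, symmDiff, inf_sup_left]
    have h1 : x ⊓ (k \ m) = ⊥ := by
      rw [sdiff_eq, ← inf_assoc, h, inf_assoc, inf_compl_eq_bot, inf_bot_eq]
    have h2 : x ⊓ (m \ k) = ⊥ := by
      rw [sdiff_eq, ← inf_assoc, ← h, inf_assoc, inf_compl_eq_bot, inf_bot_eq]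
    rw [h1, h2, sup_bot_eq]
  · intro h
    rw [disjoint_iff, symmDiff, inf_sup_left, sup_eq_bot_iff, sdiff_eq, sdiff_eq,
      ← inf_assoc, ← inf_assoc] at h
    obtain ⟨h1, h2⟩ := h
    have e1 : x ⊓ k = x ⊓ k ⊓ m := by
      have := inf_sup_left (x ⊓ k) m mᶜ
      rw [sup_compl_eq_top, inf_top_eq, h1, sup_bot_eq] at this
      exact this.symm ▸ this
    have e2 : x ⊓ m = x ⊓ m ⊓ k := by
      have := inf_sup_left (x ⊓ m) k kᶜ
      rw [sup_compl_eq_top, inf_top_eq, h2, sup_bot_eq] at this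
      exact this
    rw [e1, e2]; ac_rfl

lemma key_iff {α : Type*} [BooleanAlgebra α] (x k l m n : α) :
    (x ⊓ k) ⊔ (xᶜ ⊓ l) = (x ⊓ m) ⊔ (xᶜ ⊓ n) ↔
      Disjoint x (k ∆ m) ∧ Disjoint xᶜ (l ∆ n) := by
  rw [← inf_eq_inf_iff_disjoint_symmDiff, ← inf_eq_inf_iff_disjoint_symmDiff]
  constructor
  · intro h
    constructor
    · have := congrArg (x ⊓ ·) h
      simpa [inf_sup_left, ← inf_assoc, inf_compl_eq_bot] using this
    · have := congrArg (xᶜ ⊓ ·) h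
      simpa [inf_sup_left, ← inf_assoc, compl_inf_eq_bot] using this
  · intro ⟨h1, h2⟩; rw [h1, h2]

/-- If a Boolean subalgebra `A` of a complete Boolean algebra `B` (presented via a
Boolean embedding `iAB : A → B`) admits, in some Boolean extension `C` of `A`
(presented via a Boolean embedding `iAC : A → C`), an element `y` satisfying a
system of extension conditions with coefficients in `A`, then some `a ∈ B`
satisfies the same conditions. -/
theorem complete_boolean_algebra_solves_extension_conditions
    {B : Type*} [CompleteBooleanAlgebra B]
    {A : Type*} [BooleanAlgebra A]
    (iAB : BoundedLatticeHom A B) (hiAB : Function.Injective iAB)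
    {I : Type*} (k l m n : I → A)
    (C : Type*) [BooleanAlgebra C]
    (iAC : BoundedLatticeHom A C) (hiAC : Function.Injective iAC)
    (y : C)
    (hy : ∀ i, (y ⊓ iAC (k i)) ⊔ (yᶜ ⊓ iAC (l i)) = (y ⊓ iAC (m i)) ⊔ (yᶜ ⊓ iAC (n i))) :
    ∃ a : B, ∀ i, (a ⊓ iAB (k i)) ⊔ (aᶜ ⊓ iAB (l i)) = (a ⊓ iAB (m i)) ⊔ (aᶜ ⊓ iAB (n i)) := by
  -- translate hypotheses in C
  have hyC : ∀ i, Disjoint y (iAC (k i) ∆ iAC (m i)) ∧ Disjoint yᶜ (iAC (l i) ∆ iAC (n i)) :=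
    fun i => (key_iff y _ _ _ _).mp (hy i)
  -- key order fact in A: (l j ∆ n j) ≤ (k i ∆ m i)ᶜ
  have hA : ∀ i j, (l j ∆ n j) ≤ (k i ∆ m i)ᶜ := by
    intro i j
    have h1 : iAC (l j ∆ n j) ≤ y := by
      rw [map_symmDiff']
      have := (hyC j).2
      rwa [disjoint_compl_left_iff] at this
    have h2 : y ≤ iAC ((k i ∆ m i)ᶜ) := by
      rw [map_compl', map_symmDiff']
      exact (hyC i).1.le_compl_right
    have h3 : iAC (l j ∆ n j) ≤ iAC ((k i ∆ m i)ᶜ) := h1.trans h2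
    -- reflect order through injective lattice hom
    have : iAC ((l j ∆ n j) ⊓ (k i ∆ m i)ᶜ) = iAC (l j ∆ n j) := by
      rw [map_inf, inf_eq_left]; exact h3
    have := hiAC this
    rw [inf_eq_left] at this
    exact this
  refine ⟨⨆ j, iAB (l j ∆ n j), fun i => ?_⟩
  rw [key_iff]
  constructor
  · apply Disjoint.mono_left (iSup_le fun j => ?_) (disjoint_compl_left (a := iAB (k i) ∆ iAB (m i)))
    rw [← map_symmDiff', ← map_compl']
    exact OrderHomClass.mono iAB (hA i j)
  · rw [disjoint_compl_left_iff, ← map_symmDiff']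
    exact le_iSup (fun j => iAB (l j ∆ n j)) i
end

section
/- An abelian group D is divisible if and only if for every abelian group A, every subgroup B of A, and every group homomorphism f : B → D, there exists a group homomorphism g : A → D extending f. -/
theorem divisible_iff_injective_abelian_group (D : Type) [AddCommGroup D] :
    (∀ (d : D) (n : ℕ), 0 < n → ∃ x : D, n • x = d) ↔
      ∀ (A : Type) (_ : AddCommGroup A) (B : AddSubgroup A) (f : B →+ D),
        ∃ g : A →+ D, ∀ b : B, g b = f b := by
  constructor
  · intro hdiv A _ B f
    haveI : DivisibleBy D ℕ :=
      { div := fun d n => if h : 0 < n then (hdiv d n h).choose else 0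
        div_zero := fun d => by simp
        div_cancel := fun {n} d hn => by
          have hn' : 0 < n := Nat.pos_of_ne_zero hn
          simp only [dif_pos hn']
          exact (hdiv d n hn').choose_spec }
    haveI : DivisibleBy D ℤ := AddGroup.divisibleByIntOfDivisibleByNat D
    have baer : Module.Baer ℤ D := Module.Baer.of_divisible D
    obtain ⟨g, hg⟩ := baer.extension_property_addMonoidHom B.subtype
      Subtype.val_injective f
    exact ⟨g, fun b => congrFun (congrArg DFunLike.coe hg) b⟩
  · intro H d n hn
    set B : AddSubgroup ℤ := AddSubgroup.zmultiples (n : ℤ) with hB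
    have hmem : ∀ b : B, (n : ℤ) ∣ (b : ℤ) := by
      rintro ⟨b, hb⟩
      obtain ⟨k, hk⟩ := AddSubgroup.mem_zmultiples_iff.mp hb
      exact ⟨k, by simpa [mul_comm] using hk.symm⟩
    have hne : (n : ℤ) ≠ 0 := by exact_mod_cast hn.ne'
    let f : B →+ D :=
      { toFun := fun b => ((b : ℤ) / (n : ℤ)) • d
        map_zero' := by simp
        map_add' := fun a b => by
          obtain ⟨k, hk⟩ := hmem a
          obtain ⟨l, hl⟩ := hmem b
          have : ((a : ℤ) + (b : ℤ)) / (n : ℤ) = (a : ℤ) / n + (b : ℤ) / n := by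
            rw [hk, hl, ← mul_add, Int.mul_ediv_cancel_left _ hne,
              Int.mul_ediv_cancel_left _ hne, Int.mul_ediv_cancel_left _ hne]
          simp only [AddSubgroup.coe_add, this, add_smul] }
    obtain ⟨g, hg⟩ := H ℤ inferInstance B f
    have hnB : (n : ℤ) ∈ B := AddSubgroup.mem_zmultiples _
    refine ⟨g 1, ?_⟩
    have h1 : g (n : ℤ) = d := by
      have := hg ⟨(n : ℤ), hnB⟩
      simpa [f, Int.ediv_self hne] using this
    calc n • g 1 = g ((n : ℤ) • (1 : ℤ)) := by rw [map_zsmul, natCast_zsmul]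
    _ = d := by rw [smul_eq_mul, mul_one, h1]
end

section
/- Let B be a complete Boolean algebra. For every Boolean algebra A₁, every Boolean subalgebra A of A₁, and every Boolean algebra homomorphism g : A → B, there exists a Boolean algebra homomorphism g₁ : A₁ → B extending g (i.e., complete Boolean algebras are injective in the category of Boolean algebras). -/
namespace SikorskiAux

variable {α : Type*} [BooleanAlgebra α]

lemma bi1 (u v u' v' x : α) : (u⊓x ⊔ v⊓xᶜ) ⊓ (u'⊓x ⊔ v'⊓xᶜ) = (u⊓u')⊓x ⊔ (v⊓v')⊓xᶜ := by
  simp [inf_sup_left, inf_sup_right, inf_assoc, inf_comm, inf_left_comm]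

lemma bi2 (u v x : α) : (u⊓x ⊔ v⊓xᶜ)ᶜ = uᶜ⊓x ⊔ vᶜ⊓xᶜ := by
  apply compl_unique
  · rw [bi1]; simp
  · rw [sup_sup_sup_comm, ← inf_sup_right, ← inf_sup_right]; simp

lemma bi3 (x u u' : α) (h : u ⊓ x = u' ⊓ x) : x ≤ (u⊓u') ⊔ (uᶜ⊓u'ᶜ) := by
  have h1 : x ⊓ u ≤ u ⊓ u' := by
    rw [le_inf_iff]; refine ⟨inf_le_right, ?_⟩
    rw [inf_comm x u, h]; exact inf_le_left
  have h2 : x ⊓ uᶜ ≤ uᶜ ⊓ u'ᶜ := by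
    rw [le_inf_iff]; refine ⟨inf_le_right, ?_⟩
    rw [le_compl_iff_disjoint_right, disjoint_iff]
    calc x ⊓ uᶜ ⊓ u' = (u' ⊓ x) ⊓ uᶜ := by rw [inf_comm _ u', ← inf_assoc]
    _ = (u ⊓ x) ⊓ uᶜ := by rw [h]
    _ = ⊥ := by rw [inf_comm u x, inf_assoc]; simp
  calc x = x ⊓ u ⊔ x ⊓ uᶜ := by rw [← inf_sup_left]; simp
  _ ≤ _ := sup_le_sup h1 h2

lemma bi4 (u v x : α) : (u⊓x ⊔ v⊓xᶜ) ⊓ x = u ⊓ x := by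
  rw [inf_sup_right, inf_assoc, inf_assoc]; simp

lemma bi5 (b c c' : α) (h : b ≤ (c⊓c') ⊔ (cᶜ⊓c'ᶜ)) : c ⊓ b = c' ⊓ b := by
  have key : ∀ e e' : α, b ≤ (e⊓e') ⊔ (eᶜ⊓e'ᶜ) → e ⊓ b ≤ e' ⊓ b := by
    intro e e' he
    refine le_inf ?_ inf_le_right
    calc e ⊓ b ≤ e ⊓ ((e⊓e') ⊔ (eᶜ⊓e'ᶜ)) := inf_le_inf_left _ he
    _ ≤ e' := by
      simp [inf_sup_left, ← inf_assoc]
  have h' : b ≤ (c'⊓c) ⊔ (c'ᶜ⊓cᶜ) := by rwa [inf_comm c' c, inf_comm c'ᶜ cᶜ]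
  exact le_antisymm (key c c' h) (key c' c h')

lemma mapCompl {β : Type*} [BooleanAlgebra β] (f : BoundedLatticeHom α β) (a : α) :
    f aᶜ = (f a)ᶜ := by
  refine (compl_unique ?_ ?_).symm
  · rw [← map_inf]; simp
  · rw [← map_sup]; simp

end SikorskiAux

open SikorskiAux in
/-- Complete Boolean algebras are injective in the category of Boolean algebras:
for a subalgebra `A` of `A₁` (presented via an injective Boolean hom `i`), every
Boolean hom `g : A → B` extends to `A₁`. -/
theorem complete_boolean_algebra_injective
    {B : Type*} [CompleteBooleanAlgebra B]
    {A A₁ : Type*} [BooleanAlgebra A] [BooleanAlgebra A₁]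
    (i : BoundedLatticeHom A A₁) (hi : Function.Injective i)
    (g : BoundedLatticeHom A B) :
    ∃ g₁ : BoundedLatticeHom A₁ B, ∀ a : A, g₁ (i a) = g a := by
  classical
  -- "good" sets: graphs of partial homomorphisms extending g
  set S : Set (Set (A₁ × B)) := {c |
    (∀ a : A, (i a, g a) ∈ c) ∧
    (∀ x b, (x, b) ∈ c → (xᶜ, bᶜ) ∈ c) ∧
    (∀ x b y d, (x, b) ∈ c → (y, d) ∈ c → (x ⊓ y, b ⊓ d) ∈ c) ∧
    (∀ x b d, (x, b) ∈ c → (x, d) ∈ c → b = d)} with hS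
  have hc₀ : Set.range (fun a : A => (i a, g a)) ∈ S := by
    refine ⟨fun a => ⟨a, rfl⟩, ?_, ?_, ?_⟩
    · rintro x b ⟨a, ha⟩
      refine ⟨aᶜ, ?_⟩
      simp only [Prod.mk.injEq] at ha ⊢
      exact ⟨by rw [mapCompl, ha.1], by rw [mapCompl, ha.2]⟩
    · rintro x b y d ⟨a, ha⟩ ⟨a', ha'⟩
      refine ⟨a ⊓ a', ?_⟩
      simp only [Prod.mk.injEq] at ha ha' ⊢
      exact ⟨by rw [map_inf, ha.1, ha'.1], by rw [map_inf, ha.2, ha'.2]⟩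
    · rintro x b d ⟨a, ha⟩ ⟨a', ha'⟩
      simp only [Prod.mk.injEq] at ha ha'
      rw [← ha.2, ← ha'.2]
      congr 1
      exact hi (ha.1.trans ha'.1.symm)
  obtain ⟨M, hc₀M, hM⟩ := zorn_subset_nonempty S (fun ch hchS hch hne => by
    refine ⟨⋃₀ ch, ⟨?_, ?_, ?_, ?_⟩, fun s hs => Set.subset_sUnion_of_mem hs⟩
    · intro a
      obtain ⟨c, hc⟩ := hne
      exact Set.mem_sUnion.2 ⟨c, hc, (hchS hc).1 a⟩
    · rintro x b ⟨c, hc, hxb⟩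
      exact ⟨c, hc, (hchS hc).2.1 x b hxb⟩
    · rintro x b y d ⟨c, hc, hxb⟩ ⟨c', hc', hyd⟩
      rcases hch.total hc hc' with h | h
      · exact ⟨c', hc', (hchS hc').2.2.1 x b y d (h hxb) hyd⟩
      · exact ⟨c, hc, (hchS hc).2.2.1 x b y d hxb (h hyd)⟩
    · rintro x b d ⟨c, hc, hxb⟩ ⟨c', hc', hxd⟩
      rcases hch.total hc hc' with h | h
      · exact (hchS hc').2.2.2 x b d (h hxb) hxd
      · exact (hchS hc).2.2.2 x b d hxb (h hxd)) _ hc₀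
  obtain ⟨hMg, hMc, hMi, hMf⟩ := hM.prop
  -- derived facts about M
  have hMtop : ((⊤ : A₁), (⊤ : B)) ∈ M := by
    have := hc₀M ⟨⊤, rfl⟩
    simpa using this
  have hMbot : ((⊥ : A₁), (⊥ : B)) ∈ M := by
    have := hc₀M ⟨⊥, rfl⟩
    simpa using this
  have hMmono : ∀ x b y d, (x, b) ∈ M → (y, d) ∈ M → x ≤ y → b ≤ d := by
    intro x b y d hxb hyd hxy
    have h1 : (x ⊓ y, b ⊓ d) ∈ M := hMi _ _ _ _ hxb hyd
    have h2 : x ⊓ y = x := inf_eq_left.2 hxy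
    rw [h2] at h1
    have := hMf x b (b ⊓ d) hxb h1
    rw [this]; exact inf_le_right
  -- totality of the maximal partial hom
  have htotal : ∀ x : A₁, ∃ b : B, (x, b) ∈ M := by
    by_contra hcon
    push_neg at hcon
    obtain ⟨x, hx⟩ := hcon
    set b : B := sSup {e | ∃ y, (y, e) ∈ M ∧ y ≤ x} with hb
    have hble : ∀ y' e', (y', e') ∈ M → x ≤ y' → b ≤ e' := by
      intro y' e' hm hle
      refine sSup_le ?_
      rintro e ⟨y, hym, hyx⟩
      exact hMmono y e y' e' hym hm (hyx.trans hle)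
    have hleb : ∀ y e, (y, e) ∈ M → y ≤ x → e ≤ b := fun y e hm h => le_sSup ⟨y, hm, h⟩
    set M' : Set (A₁ × B) := {p | ∃ u c v d, (u, c) ∈ M ∧ (v, d) ∈ M ∧
      p = (u ⊓ x ⊔ v ⊓ xᶜ, c ⊓ b ⊔ d ⊓ bᶜ)} with hM'
    have hMM' : M ⊆ M' := by
      rintro ⟨y, e⟩ hm
      refine ⟨y, e, y, e, hm, hm, ?_⟩
      have h1 : y ⊓ x ⊔ y ⊓ xᶜ = y := by rw [← inf_sup_left]; simp
      have h2 : e ⊓ b ⊔ e ⊓ bᶜ = e := by rw [← inf_sup_left]; simp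
      rw [h1, h2]
    have hM'S : M' ∈ S := by
      refine ⟨fun a => hMM' (hMg a), ?_, ?_, ?_⟩
      · rintro z e ⟨u, c, v, d, hu, hv, hp⟩
        refine ⟨uᶜ, cᶜ, vᶜ, dᶜ, hMc _ _ hu, hMc _ _ hv, ?_⟩
        simp only [Prod.ext_iff] at hp
        rw [hp.1, hp.2, bi2, bi2]
      · rintro z e z' e' ⟨u, c, v, d, hu, hv, hp⟩ ⟨u', c', v', d', hu', hv', hp'⟩
        refine ⟨u ⊓ u', c ⊓ c', v ⊓ v', d ⊓ d', hMi _ _ _ _ hu hu', hMi _ _ _ _ hv hv', ?_⟩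
        simp only [Prod.ext_iff] at hp hp'
        rw [hp.1, hp.2, hp'.1, hp'.2, bi1, bi1]
      · rintro z e e' ⟨u, c, v, d, hu, hv, hp⟩ ⟨u', c', v', d', hu', hv', hp'⟩
        simp only [Prod.ext_iff] at hp hp'
        have hzz : u ⊓ x ⊔ v ⊓ xᶜ = u' ⊓ x ⊔ v' ⊓ xᶜ := hp.1.symm.trans hp'.1
        rw [hp.2, hp'.2]
        have hux : u ⊓ x = u' ⊓ x := by
          have := congrArg (· ⊓ x) hzz
          simpa only [bi4] using this
        have hvx : v ⊓ xᶜ = v' ⊓ xᶜ := by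
          have := congrArg (· ⊓ xᶜ) hzz
          simp only [inf_sup_right, inf_assoc] at this
          simpa using this
        -- first component
        have hw : ((u ⊓ u') ⊔ (uᶜ ⊓ u'ᶜ), (c ⊓ c') ⊔ (cᶜ ⊓ c'ᶜ)) ∈ M := by
          have h1 := hMi _ _ _ _ hu hu'
          have h2 := hMi _ _ _ _ (hMc _ _ hu) (hMc _ _ hu')
          have h3 := hMc _ _ (hMi _ _ _ _ (hMc _ _ h1) (hMc _ _ h2))
          simpa using h3
        have hbc : b ≤ (c ⊓ c') ⊔ (cᶜ ⊓ c'ᶜ) :=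
          hble _ _ hw (bi3 x u u' hux)
        have e1 : c ⊓ b = c' ⊓ b := bi5 b c c' hbc
        -- second component
        have hw2 : (((v ⊓ v') ⊔ (vᶜ ⊓ v'ᶜ))ᶜ, ((d ⊓ d') ⊔ (dᶜ ⊓ d'ᶜ))ᶜ) ∈ M := by
          have h1 := hMi _ _ _ _ hv hv'
          have h2 := hMi _ _ _ _ (hMc _ _ hv) (hMc _ _ hv')
          have h3 := hMc _ _ (hMi _ _ _ _ (hMc _ _ h1) (hMc _ _ h2))
          have h4 := hMc _ _ h3
          simpa using h4
        have hxw2 : ((v ⊓ v') ⊔ (vᶜ ⊓ v'ᶜ))ᶜ ≤ x := by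
          rw [compl_le_iff_compl_le]
          exact bi3 xᶜ v v' hvx
        have hbd : bᶜ ≤ (d ⊓ d') ⊔ (dᶜ ⊓ d'ᶜ) := by
          rw [compl_le_iff_compl_le]
          exact hleb _ _ hw2 hxw2
        have e2 : d ⊓ bᶜ = d' ⊓ bᶜ := bi5 bᶜ d d' hbd
        rw [e1, e2]
    have hMeq : M' = M := le_antisymm (hM.2 hM'S hMM') hMM'
    have : (x, b) ∈ M' := by
      refine ⟨⊤, ⊤, ⊥, ⊥, hMtop, hMbot, ?_⟩
      simp
    rw [hMeq] at this
    exact hx b this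
  -- build the extension
  choose f hf using htotal
  have hfsup : ∀ x y : A₁, f (x ⊔ y) = f x ⊔ f y := by
    intro x y
    have h1 : (x ⊔ y, f x ⊔ f y) ∈ M := by
      have h := hMc _ _ (hMi _ _ _ _ (hMc _ _ (hf x)) (hMc _ _ (hf y)))
      simpa using h
    exact hMf _ _ _ (hf (x ⊔ y)) h1
  have hfinf : ∀ x y : A₁, f (x ⊓ y) = f x ⊓ f y := by
    intro x y
    exact hMf _ _ _ (hf (x ⊓ y)) (hMi _ _ _ _ (hf x) (hf y))
  have hftop : f ⊤ = ⊤ := hMf _ _ _ (hf ⊤) hMtop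
  have hfbot : f ⊥ = ⊥ := hMf _ _ _ (hf ⊥) hMbot
  refine ⟨⟨⟨⟨f, hfsup⟩, hfinf⟩, hftop, hfbot⟩, fun a => ?_⟩
  exact hMf _ _ _ (hf (i a)) (hMg a)
end
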